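/- Under the null hypothesis that X and Y are independent, the L1-type partition statistic L_n satisfies the exponential concentration bound: for all ε1, ε2, ε3 > 0, P(L_n(ν_n, μ_{n,1} × μ_{n,2}) > ε1 + ε2 + ε3) ≤ 2^{m_n m'_n} e^{-n ε1²/2} + 2^{m_n} e^{-n ε2²/2} + 2^{m'_n} e^{-n ε3²/2}. -/

import Mathlib

open MeasureTheory ProbabilityTheory Finset

lemma hoeff_log (p : ℝ) (hp : 0 ≤ p) (hp1 : p ≤ 1) (s : ℝ) (hs : 0 ≤ s) :
    Real.log (1 - p + p * Real.exp s) ≤ s * p + s ^ 2 / 8 := by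
  set q : ℝ := 1 - p with hq
  have hq0 : 0 ≤ q := by simp only [hq]; linarith
  have hqp : q + p = 1 := by simp [hq]
  have hpos : ∀ x : ℝ, 0 < q + p * Real.exp x := by
    intro x
    rcases eq_or_lt_of_le hp with h | h
    · simp only [← h, zero_mul, add_zero]; simp [hq, ← h]
    · have := Real.exp_pos x
      nlinarith
  have hder : ∀ x : ℝ, HasDerivAt (fun y => Real.log (q + p * Real.exp y))
      (p * Real.exp x / (q + p * Real.exp x)) x := by
    intro x
    have h1 : HasDerivAt (fun y => q + p * Real.exp y) (p * Real.exp x) x :=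
      ((Real.hasDerivAt_exp x).const_mul p).const_add q
    exact h1.log (hpos x).ne'
  set G : ℝ → ℝ := fun x => p + x / 4 - p * Real.exp x / (q + p * Real.exp x) with hG
  have hGder : ∀ x : ℝ, HasDerivAt G
      (1 / 4 - p * q * Real.exp x / (q + p * Real.exp x) ^ 2) x := by
    intro x
    have h1 : HasDerivAt (fun y => q + p * Real.exp y) (p * Real.exp x) x :=
      ((Real.hasDerivAt_exp x).const_mul p).const_add q
    have h2 : HasDerivAt (fun y => p * Real.exp y) (p * Real.exp x) x :=
      (Real.hasDerivAt_exp x).const_mul p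
    have h3 := h2.div h1 (hpos x).ne'
    have h4 : HasDerivAt (fun y => p + y / 4) (1 / 4) x := by
      simpa using ((hasDerivAt_id x).div_const 4).const_add p
    have h5 := h4.sub h3
    refine h5.congr_deriv ?_
    congr 2
    ring
  have hGderiv_nonneg : ∀ x : ℝ, 0 ≤ 1 / 4 - p * q * Real.exp x / (q + p * Real.exp x) ^ 2 := by
    intro x
    rw [sub_nonneg, div_le_iff₀ (pow_pos (hpos x) 2)]
    nlinarith [sq_nonneg (q - p * Real.exp x), Real.exp_pos x, hpos x]
  have hG0 : G 0 = 0 := by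
    simp only [hG, Real.exp_zero, mul_one, zero_div, add_zero]
    rw [add_comm q p] at hqp ⊢
    rw [hqp]
    simp
  have hGmono : Monotone G := by
    refine monotone_of_deriv_nonneg (fun x => (hGder x).differentiableAt) ?_
    intro x
    rw [(hGder x).deriv]
    exact hGderiv_nonneg x
  have hGnonneg : ∀ x, 0 ≤ x → 0 ≤ G x := fun x hx => hG0 ▸ hGmono hx
  set F : ℝ → ℝ := fun x => x * p + x ^ 2 / 8 - Real.log (q + p * Real.exp x) with hF
  have hFder : ∀ x : ℝ, HasDerivAt F (G x) x := by
    intro x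
    have h2 : HasDerivAt (fun y : ℝ => y * p) p x := by
      simpa using (hasDerivAt_id x).mul_const p
    have h3 := h2.add ((hasDerivAt_pow 2 x).div_const 8)
    have h1 : HasDerivAt (fun y : ℝ => y * p + y ^ 2 / 8) (p + x / 4) x := by
      exact h3.congr_deriv (by push_cast; ring)
    exact h1.sub (hder x)
  have hF0 : F 0 = 0 := by
    simp only [hF, Real.exp_zero, mul_one, zero_mul, zero_add]
    rw [hqp]
    norm_num
  have hFmono : MonotoneOn F (Set.Ici 0) := by
    refine monotoneOn_of_deriv_nonneg (convex_Ici 0) ?_ ?_ ?_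
    · exact fun x _ => (hFder x).differentiableAt.continuousAt.continuousWithinAt
    · exact fun x _ => (hFder x).differentiableAt.differentiableWithinAt
    · intro x hx
      rw [(hFder x).deriv]
      rw [interior_Ici] at hx
      exact hGnonneg x (le_of_lt hx)
  have h := hFmono Set.self_mem_Ici (Set.mem_Ici.mpr hs) hs
  rw [hF0] at h
  have h' : 0 ≤ s * p + s ^ 2 / 8 - Real.log (q + p * Real.exp s) := h
  linarith

lemma hoeff_mgf (μ t : ℝ) (h1 : -1 ≤ μ) (h2 : μ ≤ 1) (ht : 0 ≤ t) :
    Real.exp (-(t * μ)) * (Real.cosh t + μ * Real.sinh t) ≤ Real.exp (t ^ 2 / 2) := by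
  set p : ℝ := (1 + μ) / 2 with hpdef
  have hp : 0 ≤ p := by simp only [hpdef]; linarith
  have hp1 : p ≤ 1 := by simp only [hpdef]; linarith
  have hEE : Real.exp t * Real.exp (-t) = 1 := by
    rw [← Real.exp_add]; simp
  have hrw : Real.cosh t + μ * Real.sinh t
      = Real.exp (-t) * (1 - p + p * Real.exp (2 * t)) := by
    rw [Real.cosh_eq, Real.sinh_eq, two_mul, Real.exp_add]
    simp only [hpdef]
    linear_combination (-(1 + μ) / 2 * Real.exp t) * hEE
  have hlog : 1 - p + p * Real.exp (2 * t) ≤ Real.exp (2 * t * p + (2 * t) ^ 2 / 8) := by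
    have h := hoeff_log p hp hp1 (2 * t) (by linarith)
    have hX : 0 < 1 - p + p * Real.exp (2 * t) := by
      rcases eq_or_lt_of_le hp with h' | h'
      · rw [← h']; norm_num
      · nlinarith [Real.exp_pos (2 * t)]
    calc 1 - p + p * Real.exp (2 * t)
        = Real.exp (Real.log (1 - p + p * Real.exp (2 * t))) := (Real.exp_log hX).symm
      _ ≤ _ := Real.exp_le_exp.mpr h
  calc Real.exp (-(t * μ)) * (Real.cosh t + μ * Real.sinh t)
      = Real.exp (-(t * μ) + -t) * (1 - p + p * Real.exp (2 * t)) := by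
        rw [hrw, Real.exp_add]; ring
    _ ≤ Real.exp (-(t * μ) + -t) * Real.exp (2 * t * p + (2 * t) ^ 2 / 8) := by
        have := Real.exp_pos (-(t * μ) + -t)
        exact mul_le_mul_of_nonneg_left hlog this.le
    _ = Real.exp (t ^ 2 / 2) := by
        rw [← Real.exp_add]
        congr 1
        simp only [hpdef]
        ring

lemma tv_conc {Ω α : Type*} [MeasurableSpace Ω] [MeasurableSpace α]
    (P : Measure Ω) [IsProbabilityMeasure P]
    (Z : ℕ → Ω → α) (hZm : ∀ i, Measurable (Z i))
    (hid : ∀ i, IdentDistrib (Z i) (Z 0) P P)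
    (hind : iIndepFun Z P)
    {ι : Type*} [Fintype ι] [DecidableEq ι] (C : ι → Set α) (hC : ∀ j, MeasurableSet (C j))
    (hdisj : Pairwise (Function.onFun Disjoint C)) (hcov : (⋃ j, C j) = Set.univ)
    (n : ℕ) (hn : 0 < n) (ε : ℝ) (hε : 0 < ε) :
    (P {ω | ε < ∑ j : ι, |(∑ i ∈ Finset.range n,
          (C j).indicator (fun _ => (1:ℝ)) (Z i ω)) / n
        - (P ((Z 0) ⁻¹' (C j))).toReal|}).toReal
      ≤ 2 ^ (Fintype.card ι) * Real.exp (-(n:ℝ) * ε ^ 2 / 2) := by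
  classical
  set σ : Bool → ℝ := fun b => if b then 1 else -1 with hσdef
  set f : (ι → Bool) → α → ℝ :=
    fun s a => ∑ j : ι, σ (s j) * (C j).indicator (fun _ => (1:ℝ)) a with hfdef
  -- unique cell
  have hcell : ∀ a : α, ∃ j, a ∈ C j ∧ ∀ j', j' ≠ j → a ∉ C j' := by
    intro a
    have : a ∈ ⋃ j, C j := hcov ▸ Set.mem_univ a
    obtain ⟨j, hj⟩ := Set.mem_iUnion.mp this
    exact ⟨j, hj, fun j' hne hj' => Set.disjoint_left.mp (hdisj hne) hj' hj⟩
  have hfval : ∀ s a, ∃ j, a ∈ C j ∧ f s a = σ (s j) := by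
    intro s a
    obtain ⟨j, hj, huniq⟩ := hcell a
    refine ⟨j, hj, ?_⟩
    have hfa : f s a = ∑ j : ι, σ (s j) * (C j).indicator (fun _ => (1:ℝ)) a := rfl
    rw [hfa, Finset.sum_eq_single j]
    · rw [Set.indicator_of_mem hj, mul_one]
    · intro j' _ hne
      rw [Set.indicator_of_notMem (huniq j' hne), mul_zero]
    · intro h; exact absurd (Finset.mem_univ j) h
  have hf_pm : ∀ s a, f s a = 1 ∨ f s a = -1 := by
    intro s a
    obtain ⟨j, _, hval⟩ := hfval s a
    rw [hval, hσdef]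
    cases s j <;> simp
  have hf_meas : ∀ s, Measurable (f s) := by
    intro s
    refine Finset.measurable_sum _ fun j _ => ?_
    exact (measurable_const.indicator (hC j)).const_mul _
  have hbint : ∀ (g : Ω → ℝ) (c : ℝ), Measurable g → (∀ ω, ‖g ω‖ ≤ c) → Integrable g P :=
    fun g c hg hb => ⟨hg.aestronglyMeasurable,
      MeasureTheory.HasFiniteIntegral.of_bounded (ae_of_all _ hb)⟩
  set μs : (ι → Bool) → ℝ := fun s => ∫ ω, f s (Z 0 ω) ∂P with hμdef
  have hfZint : ∀ s i, Integrable (fun ω => f s (Z i ω)) P := by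
    intro s i
    refine hbint _ 1 ((hf_meas s).comp (hZm i)) fun ω => ?_
    rcases hf_pm s (Z i ω) with h | h <;> simp [h]
  have hμbd : ∀ s, -1 ≤ μs s ∧ μs s ≤ 1 := by
    intro s
    have h1 : |μs s| ≤ 1 := by
      calc |μs s| ≤ ∫ ω, |f s (Z 0 ω)| ∂P := by
            simpa [Real.norm_eq_abs] using
              norm_integral_le_integral_norm (fun ω => f s (Z 0 ω)) (μ := P)
        _ = ∫ ω, (1:ℝ) ∂P := by
            refine integral_congr_ae (ae_of_all _ fun ω => ?_)
            rcases hf_pm s (Z 0 ω) with h | h <;> simp [h]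
        _ = 1 := by simp
    exact ⟨neg_le_of_abs_le h1, le_of_abs_le h1⟩
  -- μs as sum of cell probabilities
  have hμsum : ∀ s, μs s = ∑ j : ι, σ (s j) * (P ((Z 0) ⁻¹' (C j))).toReal := by
    intro s
    rw [hμdef]
    simp only [hfdef]
    rw [integral_finset_sum]
    · refine Finset.sum_congr rfl fun j _ => ?_
      rw [integral_const_mul]
      congr 1
      have hind : ∀ ω, (C j).indicator (fun _ => (1:ℝ)) (Z 0 ω)
          = ((Z 0) ⁻¹' (C j)).indicator (fun _ => (1:ℝ)) ω := by
        intro ω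
        by_cases h : Z 0 ω ∈ C j
        · rw [Set.indicator_of_mem h, Set.indicator_of_mem (Set.mem_preimage.mpr h)]
        · rw [Set.indicator_of_notMem h,
            Set.indicator_of_notMem (fun hc => h (Set.mem_preimage.mp hc))]
      rw [integral_congr_ae (ae_of_all _ hind)]
      rw [MeasureTheory.integral_indicator_const (1:ℝ) ((hZm 0) (hC j))]
      simp [measureReal_def]
    · intro j _
      refine hbint _ 1 (((measurable_const.indicator (hC j)).const_mul _).comp (hZm 0))
        fun ω => ?_
      by_cases h : Z 0 ω ∈ C j
      · rcases s j with _ | _ <;> simp [Set.indicator_of_mem h, hσdef]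
      · simp [Set.indicator_of_notMem h]
  -- the per-sign-vector events
  set W : (ι → Bool) → ℕ → Ω → ℝ := fun s i ω => f s (Z i ω) - μs s with hWdef
  set E : (ι → Bool) → Set Ω := fun s => {ω | (n:ℝ) * ε ≤ ∑ i ∈ Finset.range n, W s i ω}
    with hEdef
  -- event inclusion
  have hsub : {ω | ε < ∑ j : ι, |(∑ i ∈ Finset.range n,
          (C j).indicator (fun _ => (1:ℝ)) (Z i ω)) / n
        - (P ((Z 0) ⁻¹' (C j))).toReal|} ⊆ ⋃ s, E s := by
    intro ω hω
    simp only [Set.mem_setOf_eq] at hω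
    set δ : ι → ℝ := fun j => (∑ i ∈ Finset.range n,
        (C j).indicator (fun _ => (1:ℝ)) (Z i ω)) / n - (P ((Z 0) ⁻¹' (C j))).toReal with hδdef
    set s : ι → Bool := fun j => decide (0 ≤ δ j) with hsdef
    refine Set.mem_iUnion.mpr ⟨s, ?_⟩
    have habs : ∀ j, σ (s j) * δ j = |δ j| := by
      intro j
      by_cases h : 0 ≤ δ j
      · simp [hsdef, hσdef, h, abs_of_nonneg h]
      · simp [hsdef, hσdef, h, abs_of_neg (lt_of_not_ge h), neg_mul]
    have hkey : ∑ i ∈ Finset.range n, W s i ω = (n:ℝ) * ∑ j, σ (s j) * δ j := by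
      have hswap : ∑ i ∈ Finset.range n, f s (Z i ω)
          = ∑ j : ι, σ (s j) * ∑ i ∈ Finset.range n,
              (C j).indicator (fun _ => (1:ℝ)) (Z i ω) := by
        simp only [hfdef]
        rw [Finset.sum_comm]
        exact Finset.sum_congr rfl fun j _ => by rw [Finset.mul_sum]
      have hnne : (n:ℝ) ≠ 0 := Nat.cast_ne_zero.mpr hn.ne'
      simp only [hWdef, Finset.sum_sub_distrib, Finset.sum_const, Finset.card_range,
        nsmul_eq_mul, hswap, hμsum s, hδdef]
      rw [Finset.mul_sum]
      rw [Finset.mul_sum]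
      rw [← Finset.sum_sub_distrib]
      refine Finset.sum_congr rfl fun j _ => ?_
      field_simp
    have hD : ε < ∑ j, σ (s j) * δ j := by
      rw [show ∑ j, σ (s j) * δ j = ∑ j, |δ j| from Finset.sum_congr rfl fun j _ => habs j]
      exact hω
    have : (n:ℝ) * ε ≤ ∑ i ∈ Finset.range n, W s i ω := by
      rw [hkey]
      have hnpos : (0:ℝ) < n := Nat.cast_pos.mpr hn
      nlinarith
    exact this
  -- per-s Chernoff bound
  have hchern : ∀ s, (P (E s)).toReal ≤ Real.exp (-(n:ℝ) * ε ^ 2 / 2) := by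
    intro s
    have hWm : ∀ i, Measurable (W s i) := fun i => ((hf_meas s).comp (hZm i)).sub measurable_const
    have hWind : iIndepFun (W s) P := by
      have := hind.comp (fun _ : ℕ => fun a : α => f s a - μs s)
        (fun _ => (hf_meas s).sub measurable_const)
      exact this
    have hWbd : ∀ i ω, |W s i ω| ≤ 2 := by
      intro i ω
      rcases hf_pm s (Z i ω) with h | h <;>
        · simp only [hWdef, h]
          rcases hμbd s with ⟨h1, h2⟩
          rw [abs_le]; constructor <;> linarith
    have hexpint : ∀ i (t : ℝ), 0 ≤ t → Integrable (fun ω => Real.exp (t * W s i ω)) P := by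
      intro i t ht
      refine hbint _ (Real.exp (t * 2)) (((hWm i).const_mul t).exp) fun ω => ?_
      rw [Real.norm_eq_abs, abs_of_pos (Real.exp_pos _), Real.exp_le_exp]
      have := hWbd i ω
      nlinarith [abs_le.mp (hWbd i ω)]
    -- mgf of single
    have hmgf0 : mgf (W s 0) P ε ≤ Real.exp (ε ^ 2 / 2) := by
      have hpt : ∀ ω, Real.exp (ε * W s 0 ω)
          = Real.exp (-(ε * μs s)) * (Real.cosh ε + f s (Z 0 ω) * Real.sinh ε) := by
        intro ω
        rcases hf_pm s (Z 0 ω) with h | h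
        · have h2 : Real.cosh ε + f s (Z 0 ω) * Real.sinh ε = Real.exp ε := by
            rw [h, Real.cosh_eq, Real.sinh_eq]; ring
          rw [h2, ← Real.exp_add]
          simp only [hWdef, h]
          congr 1; ring
        · have h2 : Real.cosh ε + f s (Z 0 ω) * Real.sinh ε = Real.exp (-ε) := by
            rw [h, Real.cosh_eq, Real.sinh_eq]; ring
          rw [h2, ← Real.exp_add]
          simp only [hWdef, h]
          congr 1; ring
      rw [mgf]
      rw [integral_congr_ae (ae_of_all _ hpt), integral_const_mul]
      rw [integral_add (integrable_const _) ((hfZint s 0).mul_const _)]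
      rw [integral_const, integral_mul_const]
      simp only [measureReal_def, measure_univ, ENNReal.toReal_one, smul_eq_mul, one_mul]
      exact hoeff_mgf (μs s) ε (hμbd s).1 (hμbd s).2 hε.le
    have hmgfi : ∀ i, mgf (W s i) P ε = mgf (W s 0) P ε := by
      intro i
      have hidW : IdentDistrib (fun ω => Real.exp (ε * W s i ω))
          (fun ω => Real.exp (ε * W s 0 ω)) P P := by
        have h1 : IdentDistrib (W s i) (W s 0) P P :=
          (hid i).comp ((hf_meas s).sub measurable_const)
        exact h1.comp ((measurable_const.mul measurable_id).exp)
      exact hidW.integral_eq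
    have hmgfsum : mgf (∑ i ∈ Finset.range n, W s i) P ε
        = ∏ i ∈ Finset.range n, mgf (W s i) P ε :=
      hWind.mgf_sum hWm (Finset.range n)
    have hsumfn : (∑ i ∈ Finset.range n, W s i) = fun ω => ∑ i ∈ Finset.range n, W s i ω := by
      ext ω; simp [Finset.sum_apply]
    have hTint : Integrable (fun ω => Real.exp (ε * (∑ i ∈ Finset.range n, W s i) ω)) P := by
      refine hbint _ (Real.exp (ε * (2 * n))) ?_ fun ω => ?_
      · exact (Measurable.const_mul (by
          rw [hsumfn]; exact Finset.measurable_sum _ fun i _ => hWm i) ε).exp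
      · rw [Real.norm_eq_abs, abs_of_pos (Real.exp_pos _), Real.exp_le_exp]
        have hb : (∑ i ∈ Finset.range n, W s i) ω ≤ 2 * n := by
          rw [Finset.sum_apply]
          calc ∑ i ∈ Finset.range n, W s i ω ≤ ∑ i ∈ Finset.range n, 2 :=
                Finset.sum_le_sum fun i _ => (abs_le.mp (hWbd i ω)).2
            _ = 2 * n := by simp [mul_comm]
        nlinarith
    have hch := measure_ge_le_exp_mul_mgf (μ := P) (X := ∑ i ∈ Finset.range n, W s i)
      ((n:ℝ) * ε) hε.le hTint
    have hEeq : E s = {ω | (n:ℝ) * ε ≤ (∑ i ∈ Finset.range n, W s i) ω} := by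
      ext ω; simp [hEdef, Finset.sum_apply]
    rw [hEeq]
    refine hch.trans ?_
    have hprod : ∏ i ∈ Finset.range n, mgf (W s i) P ε ≤ Real.exp (ε ^ 2 / 2) ^ n := by
      rw [show Real.exp (ε ^ 2 / 2) ^ n = ∏ _i ∈ Finset.range n, Real.exp (ε ^ 2 / 2) by
        simp]
      refine Finset.prod_le_prod (fun i _ => mgf_nonneg) fun i _ => ?_
      rw [hmgfi i]; exact hmgf0
    calc Real.exp (-ε * ((n:ℝ) * ε)) * mgf (∑ i ∈ Finset.range n, W s i) P ε
        ≤ Real.exp (-ε * ((n:ℝ) * ε)) * Real.exp (ε ^ 2 / 2) ^ n := by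
          refine mul_le_mul_of_nonneg_left ?_ (Real.exp_pos _).le
          rw [hmgfsum]; exact hprod
      _ = Real.exp (-(n:ℝ) * ε ^ 2 / 2) := by
          rw [← Real.exp_nat_mul, ← Real.exp_add]
          congr 1
          ring
  -- union bound
  calc (P {ω | ε < ∑ j : ι, |(∑ i ∈ Finset.range n,
          (C j).indicator (fun _ => (1:ℝ)) (Z i ω)) / n
        - (P ((Z 0) ⁻¹' (C j))).toReal|}).toReal
      ≤ (P (⋃ s, E s)).toReal :=
        ENNReal.toReal_mono (measure_ne_top _ _) (measure_mono hsub)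
    _ ≤ ∑ s : ι → Bool, (P (E s)).toReal := by
        rw [← ENNReal.toReal_sum (fun s _ => measure_ne_top _ _)]
        exact ENNReal.toReal_mono
          (ENNReal.sum_ne_top.mpr fun s _ => measure_ne_top _ _)
          (measure_iUnion_fintype_le _ _)
    _ ≤ ∑ _s : ι → Bool, Real.exp (-(n:ℝ) * ε ^ 2 / 2) :=
        Finset.sum_le_sum fun s _ => hchern s
    _ = 2 ^ (Fintype.card ι) * Real.exp (-(n:ℝ) * ε ^ 2 / 2) := by
        rw [Finset.sum_const, Finset.card_univ]
        rw [Fintype.card_fun]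
        simp [mul_comm, Fintype.card_bool]

/-- Under independence of X and Y, the partition L1 statistic satisfies
`P(L_n > ε1+ε2+ε3) ≤ 2^(m m') e^{-nε1²/2} + 2^m e^{-nε2²/2} + 2^{m'} e^{-nε3²/2}`. -/
theorem stmt0
    {Ω : Type*} [MeasurableSpace Ω] (P : Measure Ω) [IsProbabilityMeasure P]
    {d d' : ℕ} (X : ℕ → Ω → (Fin d → ℝ)) (Y : ℕ → Ω → (Fin d' → ℝ))
    (hmeas : ∀ i, Measurable (X i) ∧ Measurable (Y i))
    (hiid : ∀ i, IdentDistrib (fun ω => (X i ω, Y i ω)) (fun ω => (X 0 ω, Y 0 ω)) P P)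
    (hindep : iIndepFun (fun i ω => (X i ω, Y i ω)) P)
    (hXY : ∀ i, IndepFun (X i) (Y i) P)
    (m m' : ℕ) (A : Fin m → Set (Fin d → ℝ)) (B : Fin m' → Set (Fin d' → ℝ))
    (hA : ∀ j, MeasurableSet (A j)) (hB : ∀ k, MeasurableSet (B k))
    (hAdisj : Pairwise (Function.onFun Disjoint A)) (hAcov : (⋃ j, A j) = Set.univ)
    (hBdisj : Pairwise (Function.onFun Disjoint B)) (hBcov : (⋃ k, B k) = Set.univ)
    (n : ℕ) (hn : 0 < n)
    (L : Ω → ℝ)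
    (hL : ∀ ω, L ω = ∑ j, ∑ k,
      |(∑ i ∈ Finset.range n, Set.indicator (A j) (fun _ => (1:ℝ)) (X i ω)
          * Set.indicator (B k) (fun _ => (1:ℝ)) (Y i ω)) / n
        - ((∑ i ∈ Finset.range n, Set.indicator (A j) (fun _ => (1:ℝ)) (X i ω)) / n)
          * ((∑ i ∈ Finset.range n, Set.indicator (B k) (fun _ => (1:ℝ)) (Y i ω)) / n)|)
    (ε1 ε2 ε3 : ℝ) (hε1 : 0 < ε1) (hε2 : 0 < ε2) (hε3 : 0 < ε3) :
    (P {ω | L ω > ε1 + ε2 + ε3}).toReal ≤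
      2 ^ (m * m') * Real.exp (-(n : ℝ) * ε1 ^ 2 / 2)
      + 2 ^ m * Real.exp (-(n : ℝ) * ε2 ^ 2 / 2)
      + 2 ^ m' * Real.exp (-(n : ℝ) * ε3 ^ 2 / 2) := by
  classical
  set Z : ℕ → Ω → (Fin d → ℝ) × (Fin d' → ℝ) := fun i ω => (X i ω, Y i ω) with hZdef
  set C : Fin m × Fin m' → Set ((Fin d → ℝ) × (Fin d' → ℝ)) :=
    fun p => A p.1 ×ˢ B p.2 with hCdef
  -- apply tv_conc three times
  have h1 := tv_conc P Z (fun i => ((hmeas i).1.prodMk (hmeas i).2)) hiid hindep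
    C (fun p => (hA p.1).prod (hB p.2))
    (by
      intro p p' hne
      by_cases hj : p.1 = p'.1
      · have hk : p.2 ≠ p'.2 := fun hk => hne (Prod.ext hj hk)
        exact Set.disjoint_left.mpr fun z hz hz' => Set.disjoint_left.mp (hBdisj hk)
          hz.2 hz'.2
      · exact Set.disjoint_left.mpr fun z hz hz' => Set.disjoint_left.mp (hAdisj hj)
          hz.1 hz'.1)
    (by
      ext z
      simp only [Set.mem_iUnion, Set.mem_univ, iff_true]
      have hx : z.1 ∈ ⋃ j, A j := hAcov ▸ Set.mem_univ _
      have hy : z.2 ∈ ⋃ k, B k := hBcov ▸ Set.mem_univ _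
      obtain ⟨j, hj⟩ := Set.mem_iUnion.mp hx
      obtain ⟨k, hk⟩ := Set.mem_iUnion.mp hy
      exact ⟨(j, k), hj, hk⟩)
    n hn ε1 hε1
  have h2 := tv_conc P X (fun i => (hmeas i).1)
    (fun i => (hiid i).comp measurable_fst)
    (hindep.comp (fun _ => Prod.fst) (fun _ => measurable_fst))
    A hA hAdisj hAcov n hn ε2 hε2
  have h3 := tv_conc P Y (fun i => (hmeas i).2)
    (fun i => (hiid i).comp measurable_snd)
    (hindep.comp (fun _ => Prod.snd) (fun _ => measurable_snd))
    B hB hBdisj hBcov n hn ε3 hε3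
  -- names for the three events
  set S1 : Set Ω := {ω | ε1 < ∑ p : Fin m × Fin m', |(∑ i ∈ Finset.range n,
          (C p).indicator (fun _ => (1:ℝ)) (Z i ω)) / n
        - (P ((Z 0) ⁻¹' (C p))).toReal|} with hS1
  set S2 : Set Ω := {ω | ε2 < ∑ j : Fin m, |(∑ i ∈ Finset.range n,
          (A j).indicator (fun _ => (1:ℝ)) (X i ω)) / n
        - (P ((X 0) ⁻¹' (A j))).toReal|} with hS2
  set S3 : Set Ω := {ω | ε3 < ∑ k : Fin m', |(∑ i ∈ Finset.range n,
          (B k).indicator (fun _ => (1:ℝ)) (Y i ω)) / n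
        - (P ((Y 0) ⁻¹' (B k))).toReal|} with hS3
  -- indicator product fact
  have hindprod : ∀ (j : Fin m) (k : Fin m') (x : Fin d → ℝ) (y : Fin d' → ℝ),
      (A j ×ˢ B k).indicator (fun _ => (1:ℝ)) (x, y)
        = (A j).indicator (fun _ => (1:ℝ)) x * (B k).indicator (fun _ => (1:ℝ)) y := by
    intro j k x y
    by_cases hx : x ∈ A j <;> by_cases hy : y ∈ B k <;>
      simp [Set.indicator_apply, hx, hy, Set.mem_prod]
  -- product probability factorization
  have hfact : ∀ (j : Fin m) (k : Fin m'),
      (P ((Z 0) ⁻¹' (C (j, k)))).toReal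
        = (P ((X 0) ⁻¹' (A j))).toReal * (P ((Y 0) ⁻¹' (B k))).toReal := by
    intro j k
    have hpre : (Z 0) ⁻¹' (C (j, k)) = (X 0) ⁻¹' (A j) ∩ (Y 0) ⁻¹' (B k) := by
      ext ω; simp [hZdef, hCdef, Set.mem_prod]
    rw [hpre, (hXY 0).measure_inter_preimage_eq_mul _ _ (hA j) (hB k),
      ENNReal.toReal_mul]
  -- sum of marginal Y-probabilities is 1
  have hqsum : ∑ k : Fin m', (P ((Y 0) ⁻¹' (B k))).toReal = 1 := by
    have hdisjp : Pairwise (Function.onFun Disjoint (fun k => (Y 0) ⁻¹' (B k))) :=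
      fun k k' hne => Set.disjoint_left.mpr fun ω hω hω' =>
        Set.disjoint_left.mp (hBdisj hne) hω hω'
    have hmeasp : ∀ k, MeasurableSet ((Y 0) ⁻¹' (B k)) := fun k => (hmeas 0).2 (hB k)
    have hU : (⋃ k, (Y 0) ⁻¹' (B k)) = Set.univ := by
      rw [← Set.preimage_iUnion, hBcov, Set.preimage_univ]
    have h := measure_iUnion hdisjp hmeasp (μ := P)
    rw [hU, measure_univ, tsum_fintype] at h
    have := congrArg ENNReal.toReal h
    rw [ENNReal.toReal_one, ENNReal.toReal_sum (fun k _ => measure_ne_top _ _)] at this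
    exact this.symm
  -- pointwise partition sum for A
  have hasum : ∀ ω, ∑ j : Fin m, (∑ i ∈ Finset.range n,
      (A j).indicator (fun _ => (1:ℝ)) (X i ω)) / n = 1 := by
    intro ω
    have hcell : ∀ i, ∑ j : Fin m, (A j).indicator (fun _ => (1:ℝ)) (X i ω) = 1 := by
      intro i
      have hx : X i ω ∈ ⋃ j, A j := hAcov ▸ Set.mem_univ _
      obtain ⟨j, hj⟩ := Set.mem_iUnion.mp hx
      rw [Finset.sum_eq_single j]
      · rw [Set.indicator_of_mem hj]
      · intro j' _ hne
        refine Set.indicator_of_notMem (fun hj' => ?_) _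
        exact Set.disjoint_left.mp (hAdisj hne) hj' hj
      · intro h; exact absurd (Finset.mem_univ j) h
    rw [← Finset.sum_div, Finset.sum_comm]
    simp only [hcell]
    rw [Finset.sum_const, Finset.card_range, nsmul_eq_mul, mul_one]
    field_simp
  -- event inclusion
  have hsub : {ω | L ω > ε1 + ε2 + ε3} ⊆ S1 ∪ S2 ∪ S3 := by
    intro ω hω
    simp only [Set.mem_setOf_eq, gt_iff_lt] at hω
    by_contra hc
    simp only [Set.mem_union, hS1, hS2, hS3, Set.mem_setOf_eq, not_or, not_lt] at hc
    obtain ⟨⟨hc1, hc2⟩, hc3⟩ := hc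
    -- notation
    set a : Fin m → ℝ := fun j => (∑ i ∈ Finset.range n,
      (A j).indicator (fun _ => (1:ℝ)) (X i ω)) / n with ha
    set b : Fin m' → ℝ := fun k => (∑ i ∈ Finset.range n,
      (B k).indicator (fun _ => (1:ℝ)) (Y i ω)) / n with hb
    set c : Fin m → Fin m' → ℝ := fun j k => (∑ i ∈ Finset.range n,
      (A j).indicator (fun _ => (1:ℝ)) (X i ω) * (B k).indicator (fun _ => (1:ℝ)) (Y i ω)) / n
      with hcdef
    set pp : Fin m → ℝ := fun j => (P ((X 0) ⁻¹' (A j))).toReal with hpp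
    set qq : Fin m' → ℝ := fun k => (P ((Y 0) ⁻¹' (B k))).toReal with hqq
    have ha_nonneg : ∀ j, 0 ≤ a j := by
      intro j
      refine div_nonneg (Finset.sum_nonneg fun i _ => ?_) (Nat.cast_nonneg n)
      exact Set.indicator_nonneg (fun _ _ => zero_le_one) _
    have hq_nonneg : ∀ k, 0 ≤ qq k := fun k => ENNReal.toReal_nonneg
    -- rewrite S1 sum in terms of c
    have hD1 : ∑ p : Fin m × Fin m', |(∑ i ∈ Finset.range n,
          (C p).indicator (fun _ => (1:ℝ)) (Z i ω)) / n
        - (P ((Z 0) ⁻¹' (C p))).toReal|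
        = ∑ j : Fin m, ∑ k : Fin m', |c j k - pp j * qq k| := by
      rw [Fintype.sum_prod_type]
      refine Finset.sum_congr rfl fun j _ => Finset.sum_congr rfl fun k _ => ?_
      congr 1
      rw [hfact j k]
      congr 2
      refine Finset.sum_congr rfl fun i _ => ?_
      exact hindprod j k (X i ω) (Y i ω)
    rw [hD1] at hc1
    -- the triangle bound
    have htri : L ω ≤ (∑ j, ∑ k, |c j k - pp j * qq k|)
        + (∑ j, |a j - pp j|) + (∑ k, |b k - qq k|) := by
      rw [hL ω]
      have hstep : ∀ j k, |c j k - a j * b k|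
          ≤ |c j k - pp j * qq k| + qq k * |a j - pp j| + a j * |b k - qq k| := by
        intro j k
        have e1 : c j k - a j * b k
            = (c j k - pp j * qq k) + qq k * (pp j - a j) + a j * (qq k - b k) := by ring
        calc |c j k - a j * b k|
            ≤ |c j k - pp j * qq k| + |qq k * (pp j - a j)| + |a j * (qq k - b k)| := by
              rw [e1]
              exact (abs_add_le _ _).trans (add_le_add (abs_add_le _ _) le_rfl)
          _ = |c j k - pp j * qq k| + qq k * |a j - pp j| + a j * |b k - qq k| := by
              rw [abs_mul, abs_mul, abs_of_nonneg (hq_nonneg k), abs_of_nonneg (ha_nonneg j),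
                abs_sub_comm (pp j) (a j), abs_sub_comm (qq k) (b k)]
      calc ∑ j, ∑ k, |c j k - a j * b k|
          ≤ ∑ j, ∑ k, (|c j k - pp j * qq k| + qq k * |a j - pp j| + a j * |b k - qq k|) :=
            Finset.sum_le_sum fun j _ => Finset.sum_le_sum fun k _ => hstep j k
        _ = (∑ j, ∑ k, |c j k - pp j * qq k|)
            + (∑ j, |a j - pp j|) * (∑ k, qq k) + (∑ j, a j) * (∑ k, |b k - qq k|) := by
            simp only [Finset.sum_add_distrib]
            congr 1
            · congr 1
              rw [Finset.sum_mul]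
              refine Finset.sum_congr rfl fun j _ => ?_
              rw [Finset.mul_sum]
              refine Finset.sum_congr rfl fun k _ => ?_
              ring
            · rw [Finset.sum_mul]
              refine Finset.sum_congr rfl fun j _ => ?_
              rw [Finset.mul_sum]
        _ = (∑ j, ∑ k, |c j k - pp j * qq k|)
            + (∑ j, |a j - pp j|) + (∑ k, |b k - qq k|) := by
            rw [hqsum]
            have : ∑ j, a j = 1 := hasum ω
            rw [this, mul_one, one_mul]
    -- contradiction
    have : L ω ≤ ε1 + ε2 + ε3 := htri.trans (by
      refine add_le_add (add_le_add hc1 hc2) hc3)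
    linarith
  -- measure bookkeeping
  have hmono : P {ω | L ω > ε1 + ε2 + ε3} ≤ P S1 + P S2 + P S3 :=
    le_trans (measure_mono hsub) (le_trans (measure_union_le _ _)
      (add_le_add (measure_union_le _ _) le_rfl))
  have htR : (P {ω | L ω > ε1 + ε2 + ε3}).toReal
      ≤ (P S1).toReal + (P S2).toReal + (P S3).toReal := by
    have hne : P S1 + P S2 + P S3 ≠ ⊤ := by
      simp [ENNReal.add_ne_top, measure_ne_top]
    calc (P {ω | L ω > ε1 + ε2 + ε3}).toReal
        ≤ (P S1 + P S2 + P S3).toReal := ENNReal.toReal_mono hne hmono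
      _ = (P S1).toReal + (P S2).toReal + (P S3).toReal := by
          rw [ENNReal.toReal_add (by simp [ENNReal.add_ne_top, measure_ne_top])
              (measure_ne_top _ _),
            ENNReal.toReal_add (measure_ne_top _ _) (measure_ne_top _ _)]
  refine htR.trans ?_
  have hcard1 : (2:ℝ) ^ (Fintype.card (Fin m × Fin m')) = 2 ^ (m * m') := by
    rw [Fintype.card_prod, Fintype.card_fin, Fintype.card_fin]
  have hcard2 : (2:ℝ) ^ (Fintype.card (Fin m)) = 2 ^ m := by rw [Fintype.card_fin]
  have hcard3 : (2:ℝ) ^ (Fintype.card (Fin m')) = 2 ^ m' := by rw [Fintype.card_fin]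
  refine add_le_add (add_le_add ?_ ?_) ?_
  · exact h1.trans_eq (by rw [hcard1])
  · exact h2.trans_eq (by rw [hcard2])
  · exact h3.trans_eq (by rw [hcard3])
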